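/- For f = ∑_{t∈T} a_t p^t ∈ R(x) with degree-growth constant C, and any ε ∈ ℝ^n with ‖ε‖·C < 1 and any t ∈ T with t ≠ val(f), one has val(a_t(p^ε x) p^t) ≥ t - ‖ε‖(t - val(f))·C; consequently the substituted series f(p^ε x) is a well-defined element of F(x). -/

import Mathlib

noncomputable section
open Classical
set_option synthInstance.maxHeartbeats 1000000
set_option maxHeartbeats 1000000

/-- Multivariate polynomials in `n` variables over `ℂ`. -/
abbrev MvP (n : ℕ) := MvPolynomial (Fin n) ℂ

/-- The field of rational functions in `n` variables over `ℂ`. -/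
abbrev KK (n : ℕ) := FractionRing (MvP n)

/-- The minimal `ε`-weight `min_{m ∈ supp f} ∑ i, ε i * m i` of a multivariate
polynomial: the `p`-adic valuation of `f(p^{ε₁}x₁, …, p^{εₙ}xₙ)`. -/
def mvValEps (n : ℕ) (ε : Fin n → ℝ) (f : MvP n) : ℝ :=
  if h : f.support.Nonempty then f.support.inf' h (fun m => ∑ i, ε i * (m i : ℝ)) else 0

/-- `deg_ε(r)` for a rational function `r`: the `p`-adic valuation of
`r(p^{ε₁}x₁, …, p^{εₙ}xₙ)`, computed from a fraction representation of `r`. -/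
def degEps (n : ℕ) (ε : Fin n → ℝ) (r : KK n) : ℝ :=
  mvValEps n ε (IsLocalization.sec (nonZeroDivisors (MvP n)) r).1
  - mvValEps n ε ((IsLocalization.sec (nonZeroDivisors (MvP n)) r).2 : MvP n)

/-- The degree `deg(r) = -inf_{ε ≠ 0} deg_ε(r)/‖ε‖` of a rational function, with
`‖·‖` the supremum norm on `Fin n → ℝ`. -/
def degK (n : ℕ) (r : KK n) : ℝ :=
  -sInf {d : ℝ | ∃ ε : Fin n → ℝ, ε ≠ 0 ∧ d = degEps n ε r / ‖ε‖}

/-- Membership in `F(x)`: a Hahn series over `ℝ` with rational-function coefficients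
whose exponent set is discrete and bounded below, i.e. only finitely many exponents lie
below any given real number. -/
def FiniteBelow (n : ℕ) (f : HahnSeries ℝ (KK n)) : Prop :=
  ∀ r : ℝ, {t ∈ f.support | t ≤ r}.Finite

/-- Membership in `R(x) ⊂ F(x)`: the coefficients satisfy the degree-growth bound
`deg(a_t) ≤ C (t - val f)` for all exponents `t > val f`, for some constant `C`. -/
def InR (n : ℕ) (f : HahnSeries ℝ (KK n)) : Prop :=
  FiniteBelow n f ∧
    ∃ C : ℝ, ∀ t ∈ f.support, t ≠ f.order → degK n (f.coeff t) ≤ C * (t - f.order)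

/-- The substitution `f(p^{ε₁}x₁, …, p^{εₙ}xₙ)` of a polynomial `f`, as a Hahn series
in `p` with rational-function coefficients. -/
def polySubst (n : ℕ) (ε : Fin n → ℝ) (f : MvP n) : HahnSeries ℝ (KK n) :=
  ∑ m ∈ f.support, HahnSeries.single (∑ i, ε i * (m i : ℝ))
    (algebraMap (MvP n) (KK n) (MvPolynomial.monomial m (MvPolynomial.coeff m f)))

/-- The substitution `r(p^{ε₁}x₁, …, p^{εₙ}xₙ)` of a rational function `r`, as an
element of the field of Hahn series in `p` with rational-function coefficients. -/
def ratSubst (n : ℕ) (ε : Fin n → ℝ) (r : KK n) : HahnSeries ℝ (KK n) :=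
  polySubst n ε (IsLocalization.sec (nonZeroDivisors (MvP n)) r).1
  / polySubst n ε ((IsLocalization.sec (nonZeroDivisors (MvP n)) r).2 : MvP n)

/-- The substitution `f(p^{ε₁}x₁, …, p^{εₙ}xₙ)` of a series `f = ∑_t a_t p^t`: the
series `∑_t a_t(p^ε x) p^t` re-expanded in `p`, characterized coefficientwise by
`coeff s = ∑_t (a_t(p^ε x)).coeff (s - t)`; junk value `0` when no such Hahn series
exists. -/
def serSubst (n : ℕ) (ε : Fin n → ℝ) (f : HahnSeries ℝ (KK n)) : HahnSeries ℝ (KK n) :=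
  if h : ∃ g : HahnSeries ℝ (KK n),
      ∀ s : ℝ, g.coeff s = ∑ᶠ t : ℝ, (ratSubst n ε (f.coeff t)).coeff (s - t)
  then h.choose else 0

namespace Aux

variable {n : ℕ}

def wt (ε : Fin n → ℝ) (m : Fin n →₀ ℕ) : ℝ := ∑ i, ε i * (m i : ℝ)

def coeffHom (s : ℝ) : HahnSeries ℝ (KK n) →+ KK n where
  toFun x := x.coeff s
  map_zero' := rfl
  map_add' x y := HahnSeries.coeff_add

lemma coeff_polySubst (ε : Fin n → ℝ) (f : MvP n) (s : ℝ) :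
    (polySubst n ε f).coeff s
      = algebraMap (MvP n) (KK n)
        (∑ m ∈ f.support.filter (fun m => wt ε m = s),
          MvPolynomial.monomial m (MvPolynomial.coeff m f)) := by
  have : (polySubst n ε f).coeff s = coeffHom s (polySubst n ε f) := rfl
  rw [this, polySubst, map_sum, map_sum (algebraMap (MvP n) (KK n)), Finset.sum_filter]
  apply Finset.sum_congr rfl
  intro m _
  show (HahnSeries.single (∑ i, ε i * (m i : ℝ)) _).coeff s = _
  by_cases h : wt ε m = s
  · rw [if_pos h, show (∑ i, ε i * (m i : ℝ)) = s from h, HahnSeries.coeff_single_same]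
  · rw [if_neg h]
    have : s ≠ ∑ i, ε i * (m i : ℝ) := fun hs => h hs.symm
    rw [HahnSeries.coeff_single_of_ne this]

end Aux

namespace Aux
variable {n : ℕ}

lemma coeff_polySubst_ne (ε : Fin n → ℝ) (f : MvP n) (s : ℝ)
    (h : ∃ m ∈ f.support, wt ε m = s) : (polySubst n ε f).coeff s ≠ 0 := by
  obtain ⟨m₀, hm₀, hw⟩ := h
  rw [coeff_polySubst]
  intro hc
  have hinj := IsFractionRing.injective (MvP n) (KK n)
  have h0 : (∑ m ∈ f.support.filter (fun m => wt ε m = s),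
      MvPolynomial.monomial m (MvPolynomial.coeff m f)) = 0 := by
    apply hinj; rw [hc, map_zero]
  have := congrArg (MvPolynomial.coeff m₀) h0
  rw [MvPolynomial.coeff_sum] at this
  simp only [MvPolynomial.coeff_monomial] at this
  rw [Finset.sum_ite_eq' _ m₀ (fun x => MvPolynomial.coeff x f),
    if_pos (Finset.mem_filter.mpr ⟨hm₀, hw⟩), MvPolynomial.coeff_zero] at this
  exact (MvPolynomial.mem_support_iff.mp hm₀) this

lemma coeff_polySubst_eq_zero (ε : Fin n → ℝ) (f : MvP n) (s : ℝ)
    (h : ∀ m ∈ f.support, wt ε m ≠ s) : (polySubst n ε f).coeff s = 0 := by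
  rw [coeff_polySubst]
  have : f.support.filter (fun m => wt ε m = s) = ∅ := by
    apply Finset.filter_false_of_mem
    intro m hm; exact h m hm
  rw [this, Finset.sum_empty, map_zero]

lemma polySubst_ne_zero {ε : Fin n → ℝ} {f : MvP n} (hf : f ≠ 0) :
    polySubst n ε f ≠ 0 := by
  obtain ⟨m₀, hm₀⟩ := (MvPolynomial.support_nonempty.mpr hf)
  intro h0
  exact coeff_polySubst_ne ε f (wt ε m₀) ⟨m₀, hm₀, rfl⟩ (by rw [h0]; rfl)

lemma order_polySubst {ε : Fin n → ℝ} {f : MvP n} (hf : f ≠ 0) :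
    (polySubst n ε f).order = mvValEps n ε f := by
  have hne : f.support.Nonempty := MvPolynomial.support_nonempty.mpr hf
  rw [mvValEps, dif_pos hne]
  obtain ⟨m₀, hm₀, hinf⟩ := Finset.exists_mem_eq_inf' hne (fun m => ∑ i, ε i * (m i : ℝ))
  apply le_antisymm
  · rw [hinf]
    exact HahnSeries.order_le_of_coeff_ne_zero (coeff_polySubst_ne ε f _ ⟨m₀, hm₀, rfl⟩)
  · have hc := mt HahnSeries.coeff_order_eq_zero.mp (polySubst_ne_zero hf (ε := ε))
    by_contra hlt
    push_neg at hlt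
    apply hc
    apply coeff_polySubst_eq_zero
    intro m hm hw
    have : f.support.inf' hne (fun m => ∑ i, ε i * (m i : ℝ)) ≤ wt ε m :=
      Finset.inf'_le _ hm
    rw [hw] at this
    exact absurd this (not_le.mpr hlt)

end Aux

namespace Aux
variable {n : ℕ}

lemma mvValEps_ge (ε : Fin n → ℝ) {f : MvP n} (hf : f ≠ 0) :
    -‖ε‖ * (f.totalDegree : ℝ) ≤ mvValEps n ε f := by
  have hne : f.support.Nonempty := MvPolynomial.support_nonempty.mpr hf
  rw [mvValEps, dif_pos hne]
  apply Finset.le_inf'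
  intro m hm
  have hsum : (∑ i, (m i : ℝ)) ≤ (f.totalDegree : ℝ) := by
    have h1 : m.sum (fun _ e => e) ≤ f.totalDegree := MvPolynomial.le_totalDegree hm
    have h2 : m.sum (fun _ e => e) = ∑ i, m i := Finsupp.sum_fintype _ _ (fun _ => rfl)
    rw [h2] at h1
    calc (∑ i, (m i : ℝ)) = ((∑ i, m i : ℕ) : ℝ) := by push_cast; ring
    _ ≤ _ := Nat.cast_le.mpr h1
  calc -‖ε‖ * (f.totalDegree : ℝ) ≤ -‖ε‖ * ∑ i, (m i : ℝ) := by
        apply mul_le_mul_of_nonpos_left hsum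
        simp [norm_nonneg]
  _ = ∑ i, -‖ε‖ * (m i : ℝ) := by rw [Finset.mul_sum]
  _ ≤ ∑ i, ε i * (m i : ℝ) := by
        apply Finset.sum_le_sum
        intro i _
        apply mul_le_mul_of_nonneg_right _ (Nat.cast_nonneg _)
        have := norm_le_pi_norm ε i
        rw [Real.norm_eq_abs] at this
        linarith [abs_le.mp this]

lemma mvValEps_le (ε : Fin n → ℝ) {f : MvP n} (hf : f ≠ 0) :
    mvValEps n ε f ≤ ‖ε‖ * (f.totalDegree : ℝ) := by
  have hne : f.support.Nonempty := MvPolynomial.support_nonempty.mpr hf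
  rw [mvValEps, dif_pos hne]
  obtain ⟨m, hm⟩ := hne
  refine le_trans (Finset.inf'_le _ hm) ?_
  have hsum : (∑ i, (m i : ℝ)) ≤ (f.totalDegree : ℝ) := by
    have h1 : m.sum (fun _ e => e) ≤ f.totalDegree := MvPolynomial.le_totalDegree hm
    have h2 : m.sum (fun _ e => e) = ∑ i, m i := Finsupp.sum_fintype _ _ (fun _ => rfl)
    rw [h2] at h1
    calc (∑ i, (m i : ℝ)) = ((∑ i, m i : ℕ) : ℝ) := by push_cast; ring
    _ ≤ _ := Nat.cast_le.mpr h1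
  calc (∑ i, ε i * (m i : ℝ)) ≤ ∑ i, ‖ε‖ * (m i : ℝ) := by
        apply Finset.sum_le_sum
        intro i _
        apply mul_le_mul_of_nonneg_right _ (Nat.cast_nonneg _)
        have := norm_le_pi_norm ε i
        rw [Real.norm_eq_abs] at this
        linarith [abs_le.mp this]
  _ = ‖ε‖ * ∑ i, (m i : ℝ) := by rw [Finset.mul_sum]
  _ ≤ _ := by
        apply mul_le_mul_of_nonneg_left hsum (norm_nonneg _)

lemma mvValEps_zero (f : MvP n) : mvValEps n (0 : Fin n → ℝ) f = 0 := by
  rw [mvValEps]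
  split_ifs with h
  · obtain ⟨m, hm, he⟩ := Finset.exists_mem_eq_inf' h (fun m => ∑ i, (0:Fin n → ℝ) i * (m i : ℝ))
    simp [he]
  · rfl

end Aux

namespace Aux
variable {n : ℕ}

lemma sec_fst_ne_zero {r : KK n} (hr : r ≠ 0) :
    (IsLocalization.sec (nonZeroDivisors (MvP n)) r).1 ≠ 0 := by
  intro h0
  have := IsLocalization.sec_spec (M := nonZeroDivisors (MvP n)) r
  rw [h0, map_zero] at this
  have hden : (algebraMap (MvP n) (KK n))
      ((IsLocalization.sec (nonZeroDivisors (MvP n)) r).2 : MvP n) ≠ 0 := by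
    intro h
    exact nonZeroDivisors.ne_zero (IsLocalization.sec (nonZeroDivisors (MvP n)) r).2.2
      (IsFractionRing.injective (MvP n) (KK n) (by rw [h, map_zero]))
  exact hr (by
    rcases mul_eq_zero.mp this with h | h
    · exact h
    · exact absurd h hden)

lemma sec_snd_ne_zero (r : KK n) :
    ((IsLocalization.sec (nonZeroDivisors (MvP n)) r).2 : MvP n) ≠ 0 :=
  nonZeroDivisors.ne_zero (IsLocalization.sec (nonZeroDivisors (MvP n)) r).2.2

lemma sec_fst_eq_zero : (IsLocalization.sec (nonZeroDivisors (MvP n)) (0 : KK n)).1 = 0 := by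
  have := IsLocalization.sec_spec (M := nonZeroDivisors (MvP n)) (0 : KK n)
  rw [zero_mul] at this
  apply IsFractionRing.injective (MvP n) (KK n)
  rw [map_zero]
  exact this.symm

lemma polySubst_zero (ε : Fin n → ℝ) : polySubst n ε (0 : MvP n) = 0 := by
  rw [polySubst, MvPolynomial.support_zero, Finset.sum_empty]

lemma ratSubst_zero (ε : Fin n → ℝ) : ratSubst n ε (0 : KK n) = 0 := by
  rw [ratSubst, sec_fst_eq_zero, polySubst_zero]
  exact zero_div (G₀ := HahnSeries ℝ (KK n)) _

lemma ratSubst_ne_zero {ε : Fin n → ℝ} {r : KK n} (hr : r ≠ 0) : ratSubst n ε r ≠ 0 := by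
  rw [ratSubst]
  exact div_ne_zero (G₀ := HahnSeries ℝ (KK n)) (polySubst_ne_zero (sec_fst_ne_zero hr)) (polySubst_ne_zero (sec_snd_ne_zero r))

lemma order_ratSubst {ε : Fin n → ℝ} {r : KK n} (hr : r ≠ 0) :
    (ratSubst n ε r).order = degEps n ε r := by
  set a := polySubst n ε (IsLocalization.sec (nonZeroDivisors (MvP n)) r).1 with ha
  set b := polySubst n ε ((IsLocalization.sec (nonZeroDivisors (MvP n)) r).2 : MvP n) with hb
  have hA : a ≠ 0 := polySubst_ne_zero (sec_fst_ne_zero hr)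
  have hB : b ≠ 0 := polySubst_ne_zero (sec_snd_ne_zero r)
  have hdiv : a / b * b = a := div_mul_cancel₀ a hB
  have hab : a / b ≠ 0 := div_ne_zero (G₀ := HahnSeries ℝ (KK n)) hA hB
  have := HahnSeries.order_mul hab hB
  rw [hdiv] at this
  have h1 : a.order = mvValEps n ε _ := order_polySubst (sec_fst_ne_zero hr)
  have h2 : b.order = mvValEps n ε _ := order_polySubst (sec_snd_ne_zero r)
  rw [ratSubst, ← ha, ← hb, degEps, ← h1, ← h2]
  linarith

end Aux

namespace Aux
variable {n : ℕ}

lemma degEps_ge (ε : Fin n → ℝ) {r : KK n} (hr : r ≠ 0) :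
    -‖ε‖ * degK n r ≤ degEps n ε r := by
  by_cases hε : ε = 0
  · subst hε
    rw [degEps, mvValEps_zero, mvValEps_zero]
    simp
  · set D : ℝ := ((IsLocalization.sec (nonZeroDivisors (MvP n)) r).1.totalDegree : ℝ)
      + (((IsLocalization.sec (nonZeroDivisors (MvP n)) r).2 : MvP n).totalDegree : ℝ) with hD
    set S : Set ℝ := {d : ℝ | ∃ ε : Fin n → ℝ, ε ≠ 0 ∧ d = degEps n ε r / ‖ε‖} with hS
    have hbdd : BddBelow S := by
      refine ⟨-D, ?_⟩
      rintro d ⟨ε', hε', rfl⟩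
      have hε'pos : (0:ℝ) < ‖ε'‖ := norm_pos_iff.mpr hε'
      rw [le_div_iff₀ hε'pos]
      have h1 := mvValEps_ge ε' (sec_fst_ne_zero hr)
      have h2 := mvValEps_le ε' (sec_snd_ne_zero r)
      rw [degEps, hD]
      nlinarith
    have hmem : degEps n ε r / ‖ε‖ ∈ S := ⟨ε, hε, rfl⟩
    have := csInf_le hbdd hmem
    rw [degK, ← hS]
    have hεpos : (0:ℝ) < ‖ε‖ := norm_pos_iff.mpr hε
    calc -‖ε‖ * -sInf S = ‖ε‖ * sInf S := by ring
    _ ≤ ‖ε‖ * (degEps n ε r / ‖ε‖) := mul_le_mul_of_nonneg_left this (norm_nonneg _)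
    _ = degEps n ε r := by field_simp

end Aux

/-- For `f = ∑_{t ∈ T} a_t p^t ∈ R(x)` with degree-growth constant `C`, and any
`ε : Fin n → ℝ` with `‖ε‖·C < 1`: for any exponent `t ∈ T` with `t ≠ val f` one has
`val(a_t(p^ε x) p^t) ≥ t - ‖ε‖ (t - val f) C`; consequently the substituted series
`f(p^ε x)` is a well-defined element of `F(x)`: each coefficient of the re-expansion is
a finite sum, and there is a Hahn series with exactly these coefficients. -/
theorem subst_well_defined (n : ℕ) (f : HahnSeries ℝ (KK n)) (hf : f ≠ 0)
    (hFin : FiniteBelow n f) (C : ℝ)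
    (hC : ∀ t ∈ f.support, t ≠ f.order → degK n (f.coeff t) ≤ C * (t - f.order))
    (ε : Fin n → ℝ) (hε : ‖ε‖ * C < 1) :
    (∀ t ∈ f.support, t ≠ f.order →
        (ratSubst n ε (f.coeff t)).order + t ≥ t - ‖ε‖ * ((t - f.order) * C))
    ∧ (∀ s : ℝ,
        (Function.support fun t : ℝ => (ratSubst n ε (f.coeff t)).coeff (s - t)).Finite)
    ∧ ∃ g : HahnSeries ℝ (KK n),
        ∀ s : ℝ, g.coeff s = ∑ᶠ t : ℝ, (ratSubst n ε (f.coeff t)).coeff (s - t) := by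
  set δ : ℝ := ‖ε‖ * C with hδdef
  have hδ : δ < 1 := hε
  have key : ∀ t ∈ f.support, t ≠ f.order →
      -(δ * (t - f.order)) ≤ (ratSubst n ε (f.coeff t)).order := by
    intro t ht hto
    have hct : f.coeff t ≠ 0 := ht
    rw [Aux.order_ratSubst hct]
    have h1 := Aux.degEps_ge ε hct
    have h2 := hC t ht hto
    have h3 : (0:ℝ) ≤ ‖ε‖ := norm_nonneg _
    have h4 : ‖ε‖ * degK n (f.coeff t) ≤ ‖ε‖ * (C * (t - f.order)) :=
      mul_le_mul_of_nonneg_left h2 h3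
    rw [hδdef]
    nlinarith [h4]
  have claimA : ∀ t s : ℝ, (ratSubst n ε (f.coeff t)).coeff (s - t) ≠ 0 →
      t ∈ f.support ∧ (t = f.order ∨ t * (1 - δ) ≤ s - δ * f.order) := by
    intro t s hne
    have hct : f.coeff t ≠ 0 := by
      intro h0
      rw [h0, Aux.ratSubst_zero] at hne
      exact hne rfl
    refine ⟨hct, ?_⟩
    by_cases hto : t = f.order
    · exact Or.inl hto
    · right
      have h1 := key t hct hto
      have h2 : (ratSubst n ε (f.coeff t)).order ≤ s - t :=
        HahnSeries.order_le_of_coeff_ne_zero hne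
      nlinarith
  have hB : ∀ s t : ℝ, t * (1 - δ) ≤ s - δ * f.order → t ≤ (s - δ * f.order) / (1 - δ) := by
    intro s t h
    rw [le_div_iff₀ (by linarith)]
    linarith
  have hfin2 : ∀ s : ℝ,
      (Function.support fun t : ℝ => (ratSubst n ε (f.coeff t)).coeff (s - t)).Finite := by
    intro s
    apply Set.Finite.subset
      (Set.Finite.union (Set.finite_singleton f.order)
        (hFin ((s - δ * f.order) / (1 - δ))))
    intro t ht
    rcases claimA t s ht with ⟨htsupp, htcase | htle⟩
    · exact Or.inl htcase
    · exact Or.inr ⟨htsupp, hB s t htle⟩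
  refine ⟨?_, hfin2, ?_⟩
  · intro t ht hto
    have := key t ht hto
    have heq : δ * (t - f.order) = ‖ε‖ * ((t - f.order) * C) := by rw [hδdef]; ring
    rw [ge_iff_le]
    linarith [heq ▸ this]
  · -- summable family
    have hco : ∀ (t : ℝ) (x : HahnSeries ℝ (KK n)) (s : ℝ),
        (HahnSeries.single t (1 : KK n) * x).coeff s = x.coeff (s - t) := by
      intro t x s
      have h := HahnSeries.coeff_single_mul_add (r := (1 : KK n)) (x := x) (a := s - t) (b := t)
      have hst : s - t + t = s := by ring
      rw [hst] at h
      rw [h, one_mul]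
    have hsupp : ∀ t : ℝ,
        (HahnSeries.single t (1 : KK n) * ratSubst n ε (f.coeff t)).support
          = {s : ℝ | (ratSubst n ε (f.coeff t)).coeff (s - t) ≠ 0} := by
      intro t
      ext s
      rw [HahnSeries.mem_support, hco]
      rfl
    have hPWO : (⋃ t : ℝ,
        (HahnSeries.single t (1 : KK n) * ratSubst n ε (f.coeff t)).support).IsPWO := by
      apply Set.IsWF.isPWO
      rw [Set.isWF_iff_no_descending_seq]
      intro σ hσ hmem
      -- bound: all σ k ≤ σ 0
      set R : ℝ := max f.order ((σ 0 - δ * f.order) / (1 - δ)) with hR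
      have hTfin : {t ∈ f.support | t ≤ R}.Finite := hFin R
      set Tf : Finset ℝ := hTfin.toFinset with hTf
      set V : Set ℝ := Tf.sup
        (fun t => (HahnSeries.single t (1 : KK n) * ratSubst n ε (f.coeff t)).support) with hV
      have hVwf : V.IsWF := by
        rw [hV, Finset.isWF_sup]
        intro t _
        exact HahnSeries.isWF_support _
      have hmemV : ∀ k, σ k ∈ V := by
        intro k
        have hk0 := hmem k
        rw [Set.mem_iUnion] at hk0
        obtain ⟨t, hk⟩ := hk0
        have hk' : (ratSubst n ε (f.coeff t)).coeff (σ k - t) ≠ 0 := by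
          rw [hsupp t] at hk
          exact hk
        obtain ⟨htsupp, hcase⟩ := claimA t (σ k) hk'
        have hσk0 : σ k ≤ σ 0 := hσ.antitone (Nat.zero_le k)
        have htT : t ∈ Tf := by
          rw [hTf, Set.Finite.mem_toFinset]
          refine ⟨htsupp, ?_⟩
          rcases hcase with h | h
          · rw [h, hR]; exact le_max_left _ _
          · exact le_trans (hB (σ 0) t (by linarith)) (le_max_right _ _)
        rw [hV, Finset.sup_set_eq_biUnion]
        exact Set.mem_biUnion htT ((hsupp t).symm ▸ hk')
      rw [Set.isWF_iff_no_descending_seq] at hVwf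
      exact hVwf σ hσ hmemV
    let Fam : HahnSeries.SummableFamily ℝ (KK n) ℝ :=
      { toFun := fun t => HahnSeries.single t (1 : KK n) * ratSubst n ε (f.coeff t)
        isPWO_iUnion_support' := hPWO
        finite_co_support' := by
          intro s
          apply (hfin2 s).subset
          intro t ht
          simp only [Set.mem_setOf_eq, hco] at ht
          exact ht }
    refine ⟨Fam.hsum, ?_⟩
    intro s
    rw [HahnSeries.SummableFamily.coeff_hsum]
    exact finsum_congr (fun t => hco t _ s)
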